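/- For all a, b > 0 and all λ ≥ 0, ∫₀^∞ (exp(−x·f_b(λ)) − exp(−x·e^b/(e^b − 1))) ν_a(dx) = ∫₀^∞ e^{−λy} ν_{a+b}(dy); i.e., transporting the entrance rule ν_a by the transition kernel P_b of the diffusion (whose action on exponentials is P_b(e^{−λ·})(x) = e^{−x f_b(λ)}) and restricting to (0,∞) gives ν_{a+b}, expressed in Laplace-transform form (the subtracted term e^{−x·e^b/(e^b−1)} accounts for the atom at 0). -/

import Mathlib

open MeasureTheory
open scoped ENNReal NNReal

/-- The homographic family `f_a(x) = x e^a / (1 + x (e^a - 1))`. -/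
noncomputable def f (a x : ℝ) : ℝ := x * Real.exp a / (1 + x * (Real.exp a - 1))

/-- The measure `ν_a` on `(0, ∞)` with density
`y ↦ e^a (e^a - 1)⁻² e^(-y/(e^a - 1))` with respect to Lebesgue measure. -/
noncomputable def nu (a : ℝ) : Measure ℝ :=
  (volume.restrict (Set.Ioi (0 : ℝ))).withDensity fun y =>
    ENNReal.ofReal (Real.exp a / (Real.exp a - 1) ^ 2 * Real.exp (-y / (Real.exp a - 1)))

lemma integral_exp_neg_mul_Ioi' {c : ℝ} (hc : 0 < c) :
    ∫ x in Set.Ioi (0:ℝ), Real.exp (-c * x) = 1 / c := by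
  have h := integral_exp_neg_mul_rpow (p := 1) one_pos hc
  simp only [Real.rpow_one] at h
  rw [h]
  norm_num [Real.Gamma_two, Real.rpow_neg_one]

lemma nu_integral_aux (a c : ℝ) (ha : 0 < a) (hc : 0 ≤ c) :
    (∫ x, Real.exp (-x * c) ∂(nu a) =
      Real.exp a / ((Real.exp a - 1) * (c * (Real.exp a - 1) + 1))) ∧
    Integrable (fun x => Real.exp (-x * c)) (nu a) := by
  have hA : (0:ℝ) < Real.exp a - 1 := by
    have := Real.one_lt_exp_iff.2 ha; linarith
  set A := Real.exp a - 1 with hAdef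
  -- density as NNReal
  have hd : ∀ x : ℝ, (0:ℝ) ≤ Real.exp a / A ^ 2 * Real.exp (-x / A) := by
    intro x; positivity
  have hmeas : Measurable fun y : ℝ =>
      (Real.exp a / A ^ 2 * Real.exp (-y / A)).toNNReal := by
    apply Measurable.real_toNNReal; fun_prop
  have hnu : nu a = (volume.restrict (Set.Ioi (0 : ℝ))).withDensity fun y =>
      ((Real.exp a / A ^ 2 * Real.exp (-y / A)).toNNReal : ℝ≥0∞) := by
    simp [nu, ENNReal.ofReal]
    rfl
  have hcpos : 0 < c + 1 / A := by positivity
  have hcomb : ∀ x : ℝ,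
      Real.exp a / A ^ 2 * Real.exp (-x / A) * Real.exp (-x * c)
        = Real.exp a / A ^ 2 * Real.exp (-(c + 1 / A) * x) := by
    intro x
    rw [mul_assoc, ← Real.exp_add]
    congr 1
    field_simp
    ring
  constructor
  · rw [hnu, integral_withDensity_eq_integral_smul hmeas]
    have : ∀ x : ℝ, (Real.exp a / A ^ 2 * Real.exp (-x / A)).toNNReal •
        Real.exp (-x * c) = Real.exp a / A ^ 2 * Real.exp (-(c + 1 / A) * x) := by
      intro x
      rw [NNReal.smul_def, smul_eq_mul, Real.coe_toNNReal _ (hd x), hcomb x]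
    simp only [this]
    rw [integral_const_mul, integral_exp_neg_mul_Ioi' hcpos]
    field_simp
  · rw [hnu, integrable_withDensity_iff_integrable_smul hmeas]
    have heq : (fun x : ℝ => (Real.exp a / A ^ 2 * Real.exp (-x / A)).toNNReal •
        Real.exp (-x * c)) = fun x => Real.exp a / A ^ 2 * Real.exp (-(c + 1 / A) * x) := by
      funext x
      rw [NNReal.smul_def, smul_eq_mul, Real.coe_toNNReal _ (hd x), hcomb x]
    rw [heq]
    exact (exp_neg_integrableOn_Ioi 0 hcpos).const_mul _

/-- For `a, b > 0` and `λ ≥ 0`,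
`∫₀^∞ (exp (-x f_b(λ)) - exp (-x e^b/(e^b - 1))) ν_a(dx) = ∫₀^∞ e^(-λ y) ν_{a+b}(dy)`:
transporting the entrance rule `ν_a` by the transition kernel `P_b` of the diffusion (whose
action on exponentials is `P_b(e^{-λ·})(x) = e^{-x f_b(λ)}`) and restricting to `(0, ∞)`
gives `ν_{a+b}`, in Laplace-transform form (the subtracted term accounts for the atom at 0). -/
theorem entrance_rule_f (a b : ℝ) (ha : 0 < a) (hb : 0 < b) (l : ℝ) (hl : 0 ≤ l) :
    ∫ x, (Real.exp (-x * f b l) - Real.exp (-x * (Real.exp b / (Real.exp b - 1)))) ∂(nu a) =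
      ∫ y, Real.exp (-l * y) ∂(nu (a + b)) := by
  have hA : (0:ℝ) < Real.exp a - 1 := by have := Real.one_lt_exp_iff.2 ha; linarith
  have hB : (0:ℝ) < Real.exp b - 1 := by have := Real.one_lt_exp_iff.2 hb; linarith
  have hD : (0:ℝ) < 1 + l * (Real.exp b - 1) := by positivity
  have hf : 0 ≤ f b l := by
    rw [f]; positivity
  have hc2 : 0 ≤ Real.exp b / (Real.exp b - 1) := by positivity
  have h1 := nu_integral_aux a (f b l) ha hf
  have h2 := nu_integral_aux a (Real.exp b / (Real.exp b - 1)) ha hc2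
  have h3 := nu_integral_aux (a + b) l (by linarith) hl
  have hrhs : (fun y => Real.exp (-l * y)) = fun y => Real.exp (-y * l) := by
    funext y; ring_nf
  rw [integral_sub h1.2 h2.2, h1.1, h2.1, hrhs, h3.1]
  have hC : (0:ℝ) < Real.exp (a + b) - 1 := by
    have := Real.one_lt_exp_iff.2 (show 0 < a + b by linarith); linarith
  rw [f, Real.exp_add]
  have hEb : (0:ℝ) < Real.exp b := Real.exp_pos b
  have h4 : l * Real.exp b / (1 + l * (Real.exp b - 1)) * (Real.exp a - 1) + 1
      = (l * (Real.exp a * Real.exp b - 1) + 1) / (1 + l * (Real.exp b - 1)) := by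
    field_simp; ring
  have h5 : (0:ℝ) < l * (Real.exp a * Real.exp b - 1) + 1 := by
    rw [Real.exp_add] at hC; nlinarith
  rw [Real.exp_add] at hC
  rw [h4]
  field_simp
  ring
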